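/- For every natural number a ≥ 1, defining C^a_k = C(a,k) · sqrt(2a) · (k + 1/2)^{k+1/2} · (a - k + 1/2)^{a-k+1/2} / (a+1)^{a+1} for 0 ≤ k ≤ a, the maximum of C^a_k over k ∈ {0, 1, ..., a} is attained at k = 0 and k = a; moreover C^a_0 = C^a_a = sqrt(a/(a + 1/2)) · (1 - 1/(2(a+1)))^{a+1} ≤ e^{-1/2}. -/

import Mathlib

open Real

/-- `Cᵃₖ = C(a,k) √(2a) (k+1/2)^{k+1/2} (a-k+1/2)^{a-k+1/2} / (a+1)^{a+1}`. -/
noncomputable def Cak (a k : ℕ) : ℝ :=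
  (a.choose k : ℝ) * Real.sqrt (2 * a) *
    ((k : ℝ) + 1 / 2) ^ ((k : ℝ) + 1 / 2) *
    ((a : ℝ) - k + 1 / 2) ^ ((a : ℝ) - (k : ℝ) + 1 / 2) / ((a : ℝ) + 1) ^ (a + 1)

lemma logA {x : ℝ} (hx : 0 ≤ x) (hx1 : x < 1) :
    2 * x ≤ Real.log (1 + x) - Real.log (1 - x) := by
  set F : ℝ → ℝ := fun x => Real.log (1 + x) - Real.log (1 - x) - 2 * x with hF
  have hder : ∀ y ∈ Set.Ioo (0:ℝ) 1, HasDerivAt F ((1+y)⁻¹ + (1-y)⁻¹ - 2) y := by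
    intro y hy
    have h1 : (0:ℝ) < 1 + y := by linarith [hy.1]
    have h2 : (0:ℝ) < 1 - y := by linarith [hy.2]
    have d1 : HasDerivAt (fun x : ℝ => Real.log (1 + x)) (1 * (1+y)⁻¹) y :=
      HasDerivAt.log ((hasDerivAt_id y).const_add 1) (by linarith)
    have d2 : HasDerivAt (fun x : ℝ => Real.log (1 - x)) ((-1) * (1-y)⁻¹) y :=
      HasDerivAt.log ((hasDerivAt_id y).const_sub 1) (by linarith)
    have d3 : HasDerivAt (fun x : ℝ => 2 * x) 2 y := by
      simpa using (hasDerivAt_id y).const_mul (2:ℝ)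
    have := (d1.sub d2).sub d3
    convert this using 1
    all_goals first | rfl | ring
  have hcont : ContinuousOn F (Set.Ico (0:ℝ) 1) := by
    intro y hy
    have h1 : (1:ℝ) + y ≠ 0 := by have := hy.1; positivity
    have h2 : (1:ℝ) - y ≠ 0 := by have := hy.2; intro h; linarith [sub_eq_zero.mp h]
    apply ContinuousAt.continuousWithinAt
    exact (((Real.continuousAt_log h1).comp (by fun_prop)).sub
      ((Real.continuousAt_log h2).comp (by fun_prop))).sub (by fun_prop)
  have hmono : MonotoneOn F (Set.Ico (0:ℝ) 1) := by
    apply monotoneOn_of_deriv_nonneg (convex_Ico 0 1) hcont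
    · intro y hy
      rw [interior_Ico] at hy
      exact (hder y hy).differentiableAt.differentiableWithinAt
    · intro y hy
      rw [interior_Ico] at hy
      rw [(hder y hy).deriv]
      have h1 : (0:ℝ) < 1 + y := by linarith [hy.1]
      have h2 : (0:ℝ) < 1 - y := by linarith [hy.2]
      rw [sub_nonneg]
      have e1 : (1+y)⁻¹ = 1/(1+y) := by ring
      have e2 : (1-y)⁻¹ = 1/(1-y) := by ring
      rw [e1, e2, div_add_div _ _ (ne_of_gt h1) (ne_of_gt h2), le_div_iff₀ (by positivity)]
      nlinarith [hy.1, hy.2]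
  have h0 : F 0 ≤ F x := hmono ⟨le_refl 0, one_pos⟩ ⟨hx, hx1⟩ hx
  simp [hF] at h0
  linarith

lemma logB {w : ℝ} (hw : 1/2 < w) :
    1/w ≤ Real.log (w + 1/2) - Real.log (w - 1/2) := by
  have hw0 : (0:ℝ) < w := by linarith
  have hx0 : (0:ℝ) ≤ 1/(2*w) := by positivity
  have hx1 : 1/(2*w) < 1 := by rw [div_lt_one (by linarith)]; linarith
  have key := logA hx0 hx1
  have e1 : w + 1/2 = w * (1 + 1/(2*w)) := by field_simp
  have e2 : w - 1/2 = w * (1 - 1/(2*w)) := by field_simp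
  rw [e1, e2, Real.log_mul (ne_of_gt hw0) (by positivity),
      Real.log_mul (ne_of_gt hw0) (by intro h; nlinarith [sub_eq_zero.mp h])]
  have : 2 * (1/(2*w)) = 1/w := by field_simp
  linarith [this ▸ key]

noncomputable def Hf (w : ℝ) : ℝ :=
  (w + 1/2) * Real.log (w + 1/2) - (w - 1/2) * Real.log (w - 1/2) - Real.log w

lemma Hf_mono : MonotoneOn Hf (Set.Ici (1:ℝ)) := by
  have hder : ∀ y ∈ Set.Ioi (1:ℝ),
      HasDerivAt Hf (Real.log (y + 1/2) - Real.log (y - 1/2) - y⁻¹) y := by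
    intro y hy
    simp only [Set.mem_Ioi] at hy
    have h1 : y + 1/2 ≠ 0 := by positivity
    have h2 : y - 1/2 ≠ 0 := by intro h; nlinarith [sub_eq_zero.mp h]
    have d1 : HasDerivAt (fun x : ℝ => (x + 1/2) * Real.log (x + 1/2))
        ((Real.log (y + 1/2) + 1) * 1) y := by
      have := (Real.hasDerivAt_mul_log h1).comp y ((hasDerivAt_id y).add_const (1/2))
      exact this
    have d2 : HasDerivAt (fun x : ℝ => (x - 1/2) * Real.log (x - 1/2))
        ((Real.log (y - 1/2) + 1) * 1) y := by
      have := (Real.hasDerivAt_mul_log h2).comp y ((hasDerivAt_id y).sub_const (1/2))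
      exact this
    have d3 : HasDerivAt Real.log y⁻¹ y := Real.hasDerivAt_log (by positivity)
    have := (d1.sub d2).sub d3
    convert this using 1
    all_goals first | rfl | ring
  apply monotoneOn_of_deriv_nonneg (convex_Ici 1)
  · intro y hy
    simp only [Set.mem_Ici] at hy
    have h1 : y + 1/2 ≠ 0 := by positivity
    have h2 : y - 1/2 ≠ 0 := by intro h; nlinarith [sub_eq_zero.mp h]
    have h3 : y ≠ 0 := by positivity
    apply ContinuousAt.continuousWithinAt
    have c0 : ContinuousAt (fun x : ℝ => x + 1/2) y := by fun_prop
    have c0' : ContinuousAt (fun x : ℝ => x - 1/2) y := by fun_prop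
    have cl1 : ContinuousAt (fun x : ℝ => Real.log (x + 1/2)) y :=
      c0.log h1
    have cl2 : ContinuousAt (fun x : ℝ => Real.log (x - 1/2)) y :=
      c0'.log h2
    exact ((c0.mul cl1).sub (c0'.mul cl2)).sub (Real.continuousAt_log h3)
  · intro y hy
    rw [interior_Ici] at hy
    exact (hder y hy).differentiableAt.differentiableWithinAt
  · intro y hy
    rw [interior_Ici] at hy
    rw [(hder y hy).deriv]
    simp only [Set.mem_Ioi] at hy
    have := logB (show 1/2 < y by linarith)
    have : y⁻¹ = 1/y := by ring
    linarith [logB (show 1/2 < y by linarith), this ▸ (le_refl (y⁻¹))]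

lemma core {u v : ℝ} (hu : 1/2 ≤ u) (huv : u + 1 ≤ v) :
    (v - 1/2) / (u + 1/2) * (u+1) ^ (u+1) * (v-1) ^ (v-1) ≤ u ^ u * v ^ v := by
  have hu0 : (0:ℝ) < u := by linarith
  have hu1 : (0:ℝ) < u + 1 := by linarith
  have hu2 : (0:ℝ) < u + 1/2 := by linarith
  have hv0 : (0:ℝ) < v := by linarith
  have hv1 : (0:ℝ) < v - 1 := by linarith
  have hv2 : (0:ℝ) < v - 1/2 := by linarith
  have hL : (0:ℝ) < (v - 1/2) / (u + 1/2) * (u+1) ^ (u+1) * (v-1) ^ (v-1) := by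
    have := Real.rpow_pos_of_pos hu1 (u+1)
    have := Real.rpow_pos_of_pos hv1 (v-1)
    positivity
  have hR : (0:ℝ) < u ^ u * v ^ v := by
    have := Real.rpow_pos_of_pos hu0 u
    have := Real.rpow_pos_of_pos hv0 v
    positivity
  rw [← Real.log_le_log_iff hL hR]
  rw [Real.log_mul (by positivity) (ne_of_gt (Real.rpow_pos_of_pos hv1 _)),
      Real.log_mul (by positivity) (ne_of_gt (Real.rpow_pos_of_pos hu1 _)),
      Real.log_mul (ne_of_gt (Real.rpow_pos_of_pos hu0 _)) (ne_of_gt (Real.rpow_pos_of_pos hv0 _)),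
      Real.log_div (ne_of_gt hv2) (ne_of_gt hu2),
      Real.log_rpow hu1, Real.log_rpow hv1, Real.log_rpow hu0, Real.log_rpow hv0]
  have hmem1 : u + 1/2 ∈ Set.Ici (1:ℝ) := by simp; linarith
  have hmem2 : v - 1/2 ∈ Set.Ici (1:ℝ) := by simp; linarith
  have key := Hf_mono hmem1 hmem2 (by linarith)
  unfold Hf at key
  have e1 : u + 1/2 + 1/2 = u + 1 := by ring
  have e2 : u + 1/2 - 1/2 = u := by ring
  have e3 : v - 1/2 + 1/2 = v := by ring
  have e4 : v - 1/2 - 1/2 = v - 1 := by ring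
  rw [e1, e2, e3, e4] at key
  linarith

lemma core' {x n : ℝ} (hx : 0 ≤ x) (h : 2*x + 1 ≤ n) :
    (n - x)/(x+1) * (x+1+1/2) ^ (x+1+1/2) * (n-(x+1)+1/2) ^ (n-(x+1)+1/2)
      ≤ (x+1/2) ^ (x+1/2) * (n-x+1/2) ^ (n-x+1/2) := by
  have key := core (u := x+1/2) (v := n-x+1/2) (by linarith) (by linarith)
  rw [show n-x+1/2-1/2 = (n:ℝ) - x from by ring, show (x:ℝ)+1/2+1/2 = x+1 from by ring,
      show (x:ℝ)+1/2+1 = x+1+1/2 from by ring,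
      show n-x+1/2-1 = n-(x+1)+1/2 from by ring] at key
  exact key

lemma Cak_step {a k : ℕ} (h : 2*k+1 ≤ a) : Cak a (k+1) ≤ Cak a k := by
  have hka : k ≤ a := by omega
  have hC : (a.choose (k+1) : ℝ) * ((k:ℝ)+1) = (a.choose k : ℝ) * ((a:ℝ) - k) := by
    have := Nat.choose_succ_right_eq a k
    have hcast : ((a - k : ℕ) : ℝ) = (a:ℝ) - k := by
      rw [Nat.cast_sub hka]
    calc (a.choose (k+1) : ℝ) * ((k:ℝ)+1) = ((a.choose (k+1) * (k+1) : ℕ) : ℝ) := by push_cast; ring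
      _ = ((a.choose k * (a - k) : ℕ) : ℝ) := by rw [this]
      _ = (a.choose k : ℝ) * ((a:ℝ) - k) := by push_cast [hka]; ring
  have hC' : (a.choose (k+1) : ℝ) = (a.choose k : ℝ) * (((a:ℝ) - k) / ((k:ℝ)+1)) := by
    field_simp
    linarith [hC]
  unfold Cak
  have hden : (0:ℝ) < ((a:ℝ)+1)^(a+1) := by positivity
  rw [div_le_div_iff_of_pos_right hden, hC']
  push_cast
  have key := core' (x := (k:ℝ)) (n := (a:ℝ)) (by positivity) (by exact_mod_cast h)
  have c0 : (0:ℝ) ≤ (a.choose k : ℝ) * Real.sqrt (2*a) := by positivity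
  calc (a.choose k : ℝ) * (((a:ℝ) - k) / ((k:ℝ)+1)) * Real.sqrt (2*a) *
        ((k:ℝ)+1+1/2) ^ ((k:ℝ)+1+1/2) * ((a:ℝ)-((k:ℝ)+1)+1/2) ^ ((a:ℝ)-((k:ℝ)+1)+1/2)
      = ((a.choose k : ℝ) * Real.sqrt (2*a)) * (((a:ℝ) - k)/((k:ℝ)+1) *
          ((k:ℝ)+1+1/2) ^ ((k:ℝ)+1+1/2) * ((a:ℝ)-((k:ℝ)+1)+1/2) ^ ((a:ℝ)-((k:ℝ)+1)+1/2)) := by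
        ring
    _ ≤ ((a.choose k : ℝ) * Real.sqrt (2*a)) *
          (((k:ℝ)+1/2) ^ ((k:ℝ)+1/2) * ((a:ℝ)-(k:ℝ)+1/2) ^ ((a:ℝ)-(k:ℝ)+1/2)) :=
        mul_le_mul_of_nonneg_left key c0
    _ = (a.choose k : ℝ) * Real.sqrt (2*a) * ((k:ℝ)+1/2) ^ ((k:ℝ)+1/2) *
          ((a:ℝ)-(k:ℝ)+1/2) ^ ((a:ℝ)-(k:ℝ)+1/2) := by ring

lemma Cak_symm {a k : ℕ} (h : k ≤ a) : Cak a k = Cak a (a - k) := by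
  unfold Cak
  rw [Nat.choose_symm h, Nat.cast_sub h]
  rw [show (a:ℝ) - ((a:ℝ) - (k:ℝ)) + 1/2 = (k:ℝ) + 1/2 from by ring]
  ring

lemma Cak_le_zero {a : ℕ} : ∀ k, 2*k ≤ a → Cak a k ≤ Cak a 0 := by
  intro k
  induction k with
  | zero => intro _; exact le_refl _
  | succ n ih =>
    intro h
    exact (Cak_step (by omega)).trans (ih (by omega))

lemma Cak_le {a k : ℕ} (hk : k ≤ a) : Cak a k ≤ Cak a 0 := by
  by_cases h2 : 2*k ≤ a
  · exact Cak_le_zero k h2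
  · rw [Cak_symm hk]; exact Cak_le_zero (a-k) (by omega)

lemma Cak_zero_eq (a : ℕ) (ha : 1 ≤ a) :
    Cak a 0 = Real.sqrt ((a : ℝ) / ((a : ℝ) + 1 / 2)) *
      (1 - 1 / (2 * ((a : ℝ) + 1))) ^ (a + 1) := by
  have ht : (0:ℝ) < (a:ℝ) := by exact_mod_cast ha
  have ht2 : (0:ℝ) < (a:ℝ) + 1/2 := by linarith
  have ht1 : (0:ℝ) < (a:ℝ) + 1 := by linarith
  unfold Cak
  rw [Nat.choose_zero_right, Nat.cast_zero, Nat.cast_one]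
  rw [show (0:ℝ) + 1/2 = (1/2 : ℝ) from by ring, show (a:ℝ) - 0 + 1/2 = (a:ℝ) + 1/2 from by ring]
  -- (1/2)^(1/2) = sqrt(1/2)
  have e0 : ((1:ℝ)/2) ^ ((1:ℝ)/2) = Real.sqrt (1/2) := (Real.sqrt_eq_rpow (1/2)).symm
  rw [e0]
  -- split the big rpow
  have e1 : ((a:ℝ) + 1/2) ^ ((a:ℝ) + 1/2) =
      ((a:ℝ) + 1/2) ^ (a+1) * (Real.sqrt ((a:ℝ) + 1/2))⁻¹ := by
    have s1 : ((a:ℝ) + 1/2) ^ ((a:ℝ) + 1/2) = ((a:ℝ) + 1/2) ^ (((a:ℝ)+1) + (-(1/2))) := by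
      congr 1; ring
    rw [s1, Real.rpow_add ht2]
    congr 1
    · rw [show (a:ℝ)+1 = ((a+1 : ℕ):ℝ) from by push_cast; ring, Real.rpow_natCast]
    · rw [Real.rpow_neg (le_of_lt ht2), Real.sqrt_eq_rpow]
  rw [e1]
  have e2 : Real.sqrt (2*(a:ℝ)) * Real.sqrt (1/2) = Real.sqrt (a:ℝ) := by
    rw [← Real.sqrt_mul (by positivity)]
    congr 1
    ring
  have e3 : (1 : ℝ) - 1 / (2 * ((a:ℝ) + 1)) = ((a:ℝ) + 1/2) / ((a:ℝ) + 1) := by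
    field_simp
    ring
  rw [e3, div_pow]
  rw [Real.sqrt_div ht.le]
  have hs2 : Real.sqrt ((a:ℝ)+1/2) ≠ 0 := by positivity
  have hd : ((a:ℝ)+1)^(a+1) ≠ 0 := by positivity
  field_simp
  exact e2

lemma end_bound (a : ℕ) (ha : 1 ≤ a) :
    Real.sqrt ((a : ℝ) / ((a : ℝ) + 1 / 2)) *
      (1 - 1 / (2 * ((a : ℝ) + 1))) ^ (a + 1) ≤ Real.exp (-(1 / 2)) := by
  have ht : (0:ℝ) < (a:ℝ) := by exact_mod_cast ha
  have ht1 : (0:ℝ) < (a:ℝ) + 1 := by linarith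
  have h1 : Real.sqrt ((a : ℝ) / ((a : ℝ) + 1 / 2)) ≤ 1 := by
    rw [show (1:ℝ) = Real.sqrt 1 from Real.sqrt_one.symm, Real.sqrt_le_sqrt_iff (by positivity)]
    rw [Real.sqrt_one]
    rw [div_le_one (by linarith)]
    linarith
  have hbase0 : (0:ℝ) ≤ 1 - 1 / (2 * ((a:ℝ) + 1)) := by
    have : 1 / (2 * ((a:ℝ) + 1)) ≤ 1/2 := by
      rw [div_le_div_iff₀ (by linarith) (by norm_num)]
      linarith
    linarith
  have hbase : 1 - 1 / (2 * ((a:ℝ) + 1)) ≤ Real.exp (-(1 / (2 * ((a:ℝ) + 1)))) := by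
    have := Real.add_one_le_exp (-(1 / (2 * ((a:ℝ) + 1))))
    linarith
  have h2 : (1 - 1 / (2 * ((a:ℝ) + 1))) ^ (a + 1) ≤
      Real.exp (-(1 / (2 * ((a:ℝ) + 1)))) ^ (a + 1) :=
    pow_le_pow_left₀ hbase0 hbase _
  have h3 : Real.exp (-(1 / (2 * ((a:ℝ) + 1)))) ^ (a + 1) = Real.exp (-(1/2)) := by
    rw [← Real.exp_nat_mul]
    congr 1
    have : ((a+1 : ℕ) : ℝ) = (a:ℝ) + 1 := by push_cast; ring
    rw [this]
    field_simp
  calc Real.sqrt ((a : ℝ) / ((a : ℝ) + 1 / 2)) * (1 - 1 / (2 * ((a : ℝ) + 1))) ^ (a + 1)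
      ≤ 1 * Real.exp (-(1/2)) := by
        apply mul_le_mul h1 (h3 ▸ h2) (by positivity) (by norm_num)
    _ = Real.exp (-(1/2)) := by ring

theorem Cak_max_at_endpoints (a : ℕ) (ha : 1 ≤ a) :
    (∀ k ≤ a, Cak a k ≤ Cak a 0 ∧ Cak a k ≤ Cak a a) ∧
    Cak a 0 = Cak a a ∧
    Cak a 0 = Real.sqrt ((a : ℝ) / ((a : ℝ) + 1 / 2)) *
      (1 - 1 / (2 * ((a : ℝ) + 1))) ^ (a + 1) ∧
    Cak a 0 ≤ Real.exp (-(1 / 2)) := by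
  have h0a : Cak a 0 = Cak a a := by
    have := Cak_symm (a := a) (k := 0) (Nat.zero_le a)
    simpa using this
  refine ⟨?_, h0a, Cak_zero_eq a ha, ?_⟩
  · intro k hk
    exact ⟨Cak_le hk, h0a ▸ Cak_le hk⟩
  · rw [Cak_zero_eq a ha]
    exact end_bound a ha
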